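/- Assume 2K ≥ n where n = |V|. Then for every ℓ ∈ Rep, the obstruction digraph H of ℓ is acyclic: there is no vertex v with a nonempty directed path in H from v back to v. -/

import Mathlib

/-- A unit interval representation of `G`: distinct vertices are adjacent iff their
points are at distance at most `1`. -/
def IsUIRep {V : Type*} (G : SimpleGraph V) (ℓ : V → ℝ) : Prop :=
  ∀ u v : V, u ≠ v → (G.Adj u v ↔ |ℓ u - ℓ v| ≤ 1)

/-- Two vertices are indistinguishable if they have the same closed neighborhood. -/
def Indist {V : Type*} (G : SimpleGraph V) (u v : V) : Prop :=
  ∀ w : V, (w = u ∨ G.Adj u w) ↔ (w = v ∨ G.Adj v w)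

/-- `GridRep G lt K lbound ℓ`: `ℓ` belongs to `Rep(G, <, ε, lbound)` for `ε = 1/K`,
i.e. it is an `ε`-grid unit interval representation of `G` whose left-to-right order
extends `lt` and which satisfies the lower bounds. -/
def GridRep {V : Type*} (G : SimpleGraph V) (lt : V → V → Prop) (K : ℕ) (lbound : V → ℝ)
    (ℓ : V → ℝ) : Prop :=
  IsUIRep G ℓ ∧ (∀ v : V, ∃ m : ℤ, ℓ v = m * (1 / (K : ℝ))) ∧
    (∀ u v : V, lt u v → ℓ u ≤ ℓ v) ∧ (∀ v : V, lbound v ≤ ℓ v)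

/-- `w` is an obstruction of `v`: either a left-obstruction (`w < v`, non-adjacent,
and `ℓ w + 1 + ε = ℓ v`) or a right-obstruction (`v < w`, adjacent, `ℓ v + 1 = ℓ w`). -/
def Obstruction {V : Type*} (G : SimpleGraph V) (lt : V → V → Prop) (K : ℕ)
    (ℓ : V → ℝ) (v w : V) : Prop :=
  (lt w v ∧ ¬ G.Adj v w ∧ ℓ w + 1 + 1 / (K : ℝ) = ℓ v) ∨
  (lt v w ∧ G.Adj v w ∧ ℓ v + 1 = ℓ w)

/-- if `2K ≥ n`, the obstruction digraph of any `ℓ ∈ Rep` is acyclic. -/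
theorem stmt7 {V : Type*} [Fintype V] (G : SimpleGraph V) (lt : V → V → Prop)
    (hirr : ∀ v : V, ¬ lt v v)
    (htrans : ∀ a b c : V, lt a b → lt b c → lt a c)
    (hcomp : ∀ u v : V, ¬ Indist G u v → lt u v ∨ lt v u)
    (K : ℕ) (hK : 0 < K) (h2K : Fintype.card V ≤ 2 * K) (lbound : V → ℝ)
    (ℓ : V → ℝ) (hℓ : GridRep G lt K lbound ℓ) :
    ∀ v : V, ¬ Relation.TransGen (Obstruction G lt K ℓ) v v := by
  intro v hcyc
  obtain ⟨hUI, hgrid, hmono, hlb⟩ := hℓ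
  have hKR : (0:ℝ) < K := by exact_mod_cast hK
  choose m hm using hgrid
  -- each obstruction edge changes the integer coordinate by +K or -(K+1)
  have hedge : ∀ a b : V, Obstruction G lt K ℓ a b →
      m b - m a = (K:ℤ) ∨ m b - m a = -((K:ℤ)+1) := by
    intro a b hab
    rcases hab with ⟨_, _, h⟩ | ⟨_, _, h⟩
    · right
      have h1 : (m b : ℝ) * (1/K) + 1 + 1/K = (m a : ℝ) * (1/K) := by
        rw [← hm a, ← hm b]; exact h
      have h2 : (m b : ℝ) + (K:ℝ) + 1 = m a := by
        field_simp at h1; linarith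
      have h3 : (m b : ℤ) + (K:ℤ) + 1 = m a := by exact_mod_cast h2
      omega
    · left
      have h1 : (m a : ℝ) * (1/K) + 1 = (m b : ℝ) * (1/K) := by
        rw [← hm a, ← hm b]; exact h
      have h2 : (m a : ℝ) + (K:ℝ) = m b := by
        field_simp at h1; linarith
      have h3 : (m a : ℤ) + (K:ℤ) = m b := by exact_mod_cast h2
      omega
  -- extract a walk from the transitive closure
  have hwalk : ∀ w : V, Relation.TransGen (Obstruction G lt K ℓ) v w →
      ∃ (L : ℕ) (p : ℕ → V), 1 ≤ L ∧ p 0 = v ∧ p L = w ∧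
        ∀ i < L, Obstruction G lt K ℓ (p i) (p (i+1)) := by
    intro w h
    induction h with
    | @single b hvb =>
        refine ⟨1, fun k => if k = 0 then v else b, le_refl 1, by simp, by simp, ?_⟩
        intro i hi
        interval_cases i
        simpa using hvb
    | @tail b c hvb hbc ih =>
        obtain ⟨L, p, h1, h0, hL, hE⟩ := ih
        refine ⟨L + 1, fun k => if k ≤ L then p k else c, by omega, ?_, ?_, ?_⟩
        · simp [h0]
        · simp
        · intro i hi
          by_cases hiL : i < L
          · have e1 : i ≤ L := by omega
            have e2 : i + 1 ≤ L := by omega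
            simpa [e1, e2] using hE i hiL
          · have hiL' : i = L := by omega
            subst hiL'
            have e1 : i ≤ i := le_refl i
            have e2 : ¬ (i + 1 ≤ i) := by omega
            simpa [e1, e2, hL] using hbc
  obtain ⟨L, p, hL1, hp0, hpL, hE⟩ := hwalk v hcyc
  set n := Fintype.card V with hn
  -- get a closed walk of length between 1 and n
  obtain ⟨L', q, hL'1, hL'n, hq, hE'⟩ :
      ∃ (L' : ℕ) (q : ℕ → V), 1 ≤ L' ∧ L' ≤ n ∧ q L' = q 0 ∧
        ∀ i < L', Obstruction G lt K ℓ (q i) (q (i+1)) := by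
    by_cases hLe : L ≤ n
    · exact ⟨L, p, hL1, hLe, by rw [hpL, hp0], hE⟩
    · push_neg at hLe
      have hnotinj : ¬ Function.Injective (fun k : Fin (n+1) => p k) := by
        intro hinj
        have := Fintype.card_le_of_injective _ hinj
        simp [hn] at this
      obtain ⟨i, j, hij, hne⟩ := Function.not_injective_iff.mp hnotinj
      have key : ∀ i j : Fin (n+1), (i:ℕ) < (j:ℕ) → p i = p j →
          ∃ (L' : ℕ) (q : ℕ → V), 1 ≤ L' ∧ L' ≤ n ∧ q L' = q 0 ∧
            ∀ k < L', Obstruction G lt K ℓ (q k) (q (k+1)) := by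
        intro i j hlt heq
        refine ⟨(j:ℕ) - i, fun k => p ((i:ℕ) + k), by omega, by omega, ?_, ?_⟩
        · show p ((i:ℕ) + ((j:ℕ) - i)) = p ((i:ℕ) + 0)
          have e : (i:ℕ) + ((j:ℕ) - i) = j := by omega
          rw [e, ← heq]
          norm_num
        · intro k hk
          have h1 : (i:ℕ) + k < L := by
            have : (j:ℕ) ≤ n := by omega
            omega
          show Obstruction G lt K ℓ (p ((i:ℕ) + k)) (p ((i:ℕ) + (k+1)))
          have h2 : (i:ℕ) + (k+1) = (i:ℕ) + k + 1 := by omega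
          rw [h2]
          exact hE _ h1
      rcases lt_or_gt_of_ne hne with h | h
      · exact key i j h hij
      · exact key j i h hij.symm
  -- counting: sum of increments over the closed walk is zero
  have hsum : ∑ i ∈ Finset.range L', (m (q (i+1)) - m (q i)) = 0 := by
    rw [Finset.sum_range_sub (fun i => m (q i))]
    rw [hq]; ring
  set S := (Finset.range L').filter (fun i => m (q (i+1)) - m (q i) = (K:ℤ)) with hS
  set a := S.card with ha
  set b := ((Finset.range L').filter (fun i => ¬ (m (q (i+1)) - m (q i) = (K:ℤ)))).card with hb
  have hab : a + b = L' := by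
    rw [ha, hb, hS]
    rw [Finset.card_filter_add_card_filter_not]
    exact Finset.card_range L'
  have hsum2 : (a:ℤ) * K + (b:ℤ) * (-((K:ℤ)+1)) = 0 := by
    rw [← hsum, ← Finset.sum_filter_add_sum_filter_not (Finset.range L')
      (fun i => m (q (i+1)) - m (q i) = (K:ℤ))]
    congr 1
    · rw [Finset.sum_congr rfl (fun i hi => (Finset.mem_filter.mp hi).2),
        Finset.sum_const, nsmul_eq_mul]
    · rw [Finset.sum_congr rfl (g := fun _ => -((K:ℤ)+1)) ?_,
        Finset.sum_const, nsmul_eq_mul]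
      intro i hi
      obtain ⟨hir, hnK⟩ := Finset.mem_filter.mp hi
      rcases hedge _ _ (hE' i (Finset.mem_range.mp hir)) with h | h
      · exact absurd h hnK
      · exact h
  -- arithmetic contradiction
  have h1 : (a:ℤ) * K = (b:ℤ) * ((K:ℤ)+1) := by linarith
  have h2 : (b:ℤ) = ((a:ℤ) - b) * K := by linear_combination -h1
  have hKZ : (0:ℤ) < (K:ℤ) := by exact_mod_cast hK
  by_cases hb0 : b = 0
  · have : (a:ℤ) * K = 0 := by rw [h1, hb0]; simp
    have ha0 : a = 0 := by
      have := mul_eq_zero.mp this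
      rcases this with h | h
      · exact_mod_cast h
      · omega
    omega
  · have hbpos : (0:ℤ) < (b:ℤ) := by exact_mod_cast Nat.pos_of_ne_zero hb0
    have hd : (1:ℤ) ≤ (a:ℤ) - b := by
      by_contra hcon
      push_neg at hcon
      nlinarith
    have hbK : (K:ℤ) ≤ (b:ℤ) := by nlinarith
    have haK : (K:ℤ) + 1 ≤ (a:ℤ) := by nlinarith
    have : (2*K + 1 : ℤ) ≤ (a:ℤ) + b := by linarith
    have hcard : (L' : ℤ) ≤ 2 * K := by
      have : (L':ℤ) ≤ (n:ℤ) := by exact_mod_cast hL'n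
      have h2K' : (n:ℤ) ≤ 2*K := by exact_mod_cast h2K
      linarith
    have : ((a + b : ℕ) : ℤ) = (L' : ℤ) := by exact_mod_cast hab
    push_cast at this
    omega
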